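/- Let n ≥ 2 and let a_1, …, a_n be integers with a_i ≥ 2, and let w = x_n x_1^{a_1} + Σ_{i=2}^{n} x_{i−1} x_i^{a_i} ∈ ℂ[x_1, …, x_n] (the Berglund–Hübsch dual of the loop polynomial). Then the Milnor ring Q_w = ℂ[x_1, …, x_n]/(∂w/∂x_1, …, ∂w/∂x_n) is a finite-dimensional ℂ-vector space of dimension μ_w = ∏_{j=1}^{n} a_j. -/

import Mathlib

open MvPolynomial

namespace DualLoopAux

noncomputable section
open scoped Classical

variable {n : ℕ}

abbrev E (n : ℕ) := Fin n →₀ ℕ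

section Defs
variable [NeZero n] (A : Fin n → ℕ)

/-- exponent of the "small" monomial of the `j`-th partial derivative -/
def mset (j : Fin n) : E n := Finsupp.single (j - 1) 1 + Finsupp.single j (A j - 1)
/-- exponent of the "pure power" monomial of the `j`-th partial derivative -/
def vset (j : Fin n) : E n := Finsupp.single (j + 1) (A (j + 1))

/-- the `j`-th partial derivative of the dual loop polynomial, up to normalization -/
def gP (j : Fin n) : MvPolynomial (Fin n) ℂ :=
  monomial (vset A j) 1 + monomial (mset A j) ((A j : ℂ))

/-- one rewriting step at position `k` : `x_k^{a_k} ↦ x_{k-2} x_{k-1}^{a_{k-1}-1}` -/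
def rwk (k : Fin n) (u : E n) : E n :=
  u - Finsupp.single k (A k) +
    (Finsupp.single (k - 1) (A (k - 1) - 1) + Finsupp.single (k - 2) 1)

def Step (u v : E n) : Prop := ∃ k, A k ≤ u k ∧ v = rwk A k u

/-- reversed step relation, for accessibility -/
def srel (v u : E n) : Prop := Step A u v

lemma rwk_apply (k : Fin n) (u : E n) (i : Fin n) :
    rwk A k u i = u i - (if k = i then A k else 0) +
      ((if k - 1 = i then A (k - 1) - 1 else 0) + (if k - 2 = i then 1 else 0)) := by
  simp only [rwk, Finsupp.add_apply, Finsupp.tsub_apply, Finsupp.single_apply]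
  try split_ifs <;> omega

lemma le_rwk {k k' : Fin n} {u : E n} (h : k' ≠ k) (hk' : A k' ≤ u k') :
    A k' ≤ rwk A k u k' := by
  rw [rwk_apply]
  have : ¬ (k = k') := fun hc => h hc.symm
  split_ifs <;> simp_all <;> omega

lemma rwk_comm {k k' : Fin n} {u : E n} (hne : k ≠ k') (hk : A k ≤ u k)
    (hk' : A k' ≤ u k') : rwk A k (rwk A k' u) = rwk A k' (rwk A k u) := by
  ext i
  simp only [rwk_apply]
  split_ifs <;> simp_all <;> omega

lemma acc_of_step (v : E n) (hv : Acc (srel A) v) :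
    ∀ u, Step A u v → Acc (srel A) u := by
  induction hv with
  | intro v hsucc ih =>
    rintro u ⟨k, hk, rfl⟩
    constructor
    rintro w ⟨k', hk', rfl⟩
    by_cases hkk : k' = k
    · subst hkk; exact Acc.intro _ hsucc
    · have h1 : Step A (rwk A k u) (rwk A k' (rwk A k u)) :=
        ⟨k', le_rwk A hkk hk', rfl⟩
      refine ih _ h1 _ ⟨k, le_rwk A (Ne.symm hkk) hk, ?_⟩
      exact (rwk_comm A (Ne.symm hkk) hk hk').symm

end Defs
end
end DualLoopAux


namespace DualLoopAux2
open Fin.NatCast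

variable {n : ℕ} [NeZero n] (A : Fin n → ℕ)

def PR (j : Fin n) (t : ℕ) : ℤ := ∏ s ∈ Finset.range t, (A (j + (s : Fin n) + 1) : ℤ)

lemma PR_zero (j : Fin n) : PR A j 0 = 1 := by simp [PR]

lemma PR_succ (j : Fin n) (t : ℕ) :
    PR A j (t + 1) = PR A j t * (A (j + (t : Fin n) + 1) : ℤ) := by
  rw [PR, Finset.prod_range_succ]; rfl

lemma PR_shift (j : Fin n) (t : ℕ) :
    PR A j (t + 1) = (A (j + 1) : ℤ) * PR A (j + 1) t := by
  rw [PR, Finset.prod_range_succ']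
  have h0 : j + ((0 : ℕ) : Fin n) + 1 = j + 1 := by norm_num
  rw [h0, mul_comm]
  congr 1
  apply Finset.prod_congr rfl
  intro s _
  congr 2
  push_cast
  abel

lemma PR_pos (hA : ∀ i, 2 ≤ A i) (j : Fin n) (t : ℕ) : 1 ≤ PR A j t := by
  induction t with
  | zero => rw [PR_zero]
  | succ t ih =>
    rw [PR_succ]
    have h2 : (2 : ℤ) ≤ (A (j + (t : Fin n) + 1) : ℤ) := by exact_mod_cast hA _
    nlinarith

lemma PR_two (hA : ∀ i, 2 ≤ A i) (j : Fin n) (t : ℕ) : 2 * PR A j t ≤ PR A j (t + 1) := by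
  rw [PR_succ]
  have h1 := PR_pos A hA j t
  have h2 : (2 : ℤ) ≤ (A (j + (t : Fin n) + 1) : ℤ) := by exact_mod_cast hA _
  nlinarith

def SSm (j : Fin n) (m : ℕ) : ℤ := ∑ t ∈ Finset.range m, (-1 : ℤ) ^ t * PR A j t

lemma SSm_key (j : Fin n) (m : ℕ) :
    (-1 : ℤ) ^ (m + 1) * SSm A j (m + 2) = PR A j (m + 1) - (-1 : ℤ) ^ m * SSm A j (m + 1) := by
  have e : SSm A j (m + 2) = SSm A j (m + 1) + (-1 : ℤ) ^ (m + 1) * PR A j (m + 1) := by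
    rw [SSm, SSm, Finset.sum_range_succ]
  have hsq : (-1 : ℤ) ^ (m + 1) * (-1) ^ (m + 1) = 1 := by rw [← mul_pow]; norm_num
  have hs : (-1 : ℤ) ^ (m + 1) = -(-1 : ℤ) ^ m := by rw [pow_succ]; ring
  rw [e, mul_add, ← mul_assoc, hsq, one_mul, hs]
  ring

lemma SSm_bounds (hA : ∀ i, 2 ≤ A i) (j : Fin n) (m : ℕ) :
    1 ≤ (-1 : ℤ) ^ m * SSm A j (m + 1) ∧ (-1 : ℤ) ^ m * SSm A j (m + 1) ≤ PR A j m := by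
  induction m with
  | zero => simp [SSm, PR_zero]
  | succ m ih =>
    have hk := SSm_key A j m
    have h2 := PR_two A hA j m
    have h1 := PR_pos A hA j m
    constructor
    · linarith [ih.1, ih.2]
    · linarith [ih.1, ih.2]

def dw (j : Fin n) : ℤ := (-1 : ℤ) ^ (n - 1) * SSm A j n

lemma dw_pos (hA : ∀ i, 2 ≤ A i) (j : Fin n) : 1 ≤ dw A j := by
  have hn : n - 1 + 1 = n := Nat.sub_add_cancel (Nat.one_le_iff_ne_zero.mpr (NeZero.ne n))
  have h := (SSm_bounds A hA j (n - 1)).1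
  rw [hn] at h
  exact h

lemma PR_full (j : Fin n) : PR A j n = ∏ i : Fin n, (A i : ℤ) := by
  rw [PR, ← Fin.prod_univ_eq_prod_range (fun s => (A (j + (s : Fin n) + 1) : ℤ)) n]
  calc (∏ i : Fin n, (A (j + ((i : ℕ) : Fin n) + 1) : ℤ))
      = ∏ i : Fin n, (A (j + i + 1) : ℤ) := by
        apply Finset.prod_congr rfl; intro i _; rw [Fin.cast_val_eq_self]
    _ = ∏ i : Fin n, (A i : ℤ) :=
        Fintype.prod_equiv ((Equiv.addRight (1 : Fin n)).trans (Equiv.addLeft j))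
          _ _ (fun i => by simp [Equiv.trans, Equiv.addRight, Equiv.addLeft, add_assoc])

lemma SS_rec' (j : Fin n) (m : ℕ) :
    SSm A j (m + 1) =
      1 - (A (j + 1) : ℤ) * SSm A (j + 1) (m + 1) + (-1 : ℤ) ^ m * PR A j (m + 1) := by
  have h1 : ∀ t, (-1 : ℤ) ^ (t + 1) * PR A j (t + 1)
      = -(A (j + 1) : ℤ) * ((-1) ^ t * PR A (j + 1) t) := by
    intro t; rw [PR_shift, pow_succ]; ring
  have h2 : SSm A (j + 1) (m + 1)
      = (∑ t ∈ Finset.range m, (-1 : ℤ) ^ t * PR A (j + 1) t) + (-1) ^ m * PR A (j + 1) m := by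
    rw [SSm, Finset.sum_range_succ]
  have h3 : PR A j (m + 1) = (A (j + 1) : ℤ) * PR A (j + 1) m := PR_shift A j m
  rw [SSm, Finset.sum_range_succ']
  rw [Finset.sum_congr rfl (fun t _ => h1 t), ← Finset.mul_sum, PR_zero]
  linear_combination ((A (j + 1) : ℤ)) * h2 - (-1 : ℤ) ^ m * h3

lemma dw_rec (j : Fin n) :
    dw A j + (A (j + 1) : ℤ) * dw A (j + 1) = (∏ i : Fin n, (A i : ℤ)) + (-1 : ℤ) ^ (n - 1) := by
  have hn : n - 1 + 1 = n := Nat.sub_add_cancel (Nat.one_le_iff_ne_zero.mpr (NeZero.ne n))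
  have h := SS_rec' A j (n - 1)
  rw [hn, PR_full] at h
  have hsq : ((-1 : ℤ) ^ (n - 1)) * ((-1 : ℤ) ^ (n - 1)) = 1 := by rw [← mul_pow]; norm_num
  rw [dw, dw]
  linear_combination ((-1 : ℤ) ^ (n - 1)) * h + (∏ i : Fin n, (A i : ℤ)) * hsq

end DualLoopAux2
namespace DualLoopAux3
open DualLoopAux DualLoopAux2 MvPolynomial

noncomputable section

variable {n : ℕ} [NeZero n] (A : Fin n → ℕ)

/-- the weighted degree -/
def δw (u : E n) : ℤ := ∑ j : Fin n, dw A j * (u j : ℤ)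

lemma rwk_apply_int (hA : ∀ i, 2 ≤ A i) {k : Fin n} {u : E n} (hk : A k ≤ u k) (i : Fin n) :
    ((rwk A k u i : ℕ) : ℤ) = (u i : ℤ) - (if k = i then (A k : ℤ) else 0) +
      ((if k - 1 = i then (A (k - 1) : ℤ) - 1 else 0) + (if k - 2 = i then 1 else 0)) := by
  have h1 : 1 ≤ A (k - 1) := le_trans one_le_two (hA _)
  rw [rwk_apply]
  by_cases hki : k = i
  · subst hki
    split_ifs <;> omega
  · split_ifs <;> omega

lemma δ_rwk (hA : ∀ i, 2 ≤ A i) {k : Fin n} {u : E n} (hk : A k ≤ u k) :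
    δw A (rwk A k u) = δw A u := by
  have e : ∀ i : Fin n, dw A i * ((rwk A k u i : ℕ) : ℤ)
      = dw A i * (u i : ℤ) - (if k = i then dw A i * (A k : ℤ) else 0)
        + ((if k - 1 = i then dw A i * ((A (k - 1) : ℤ) - 1) else 0)
          + (if k - 2 = i then dw A i else 0)) := by
    intro i
    rw [rwk_apply_int A hA hk i]
    split_ifs <;> ring
  rw [δw, Finset.sum_congr rfl (fun i _ => e i), Finset.sum_add_distrib,
    Finset.sum_sub_distrib, Finset.sum_add_distrib, Finset.sum_ite_eq,
    Finset.sum_ite_eq, Finset.sum_ite_eq]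
  simp only [Finset.mem_univ, if_true]
  have e1 : k - 1 + 1 = k := by abel
  have e2 : k - 2 + 1 = k - 1 := by
    have : k - 2 = k - 1 - 1 := by rw [sub_sub]; norm_num; ext; simp [Fin.val_add]
    rw [this]; abel
  have r1 := dw_rec A (k - 1)
  rw [e1] at r1
  have r2 := dw_rec A (k - 2)
  rw [e2] at r2
  rw [δw]
  linarith

lemma step_delta (hA : ∀ i, 2 ≤ A i) {u v : E n} (h : Step A u v) : δw A v = δw A u := by
  obtain ⟨k, hk, rfl⟩ := h
  exact δ_rwk A hA hk

lemma delta_coord_le (hA : ∀ i, 2 ≤ A i) {u : E n} {c : ℤ} (hu : δw A u = c) (j : Fin n) :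
    (u j : ℤ) ≤ c := by
  have h1 : ∀ i : Fin n, 0 ≤ dw A i * (u i : ℤ) := fun i =>
    mul_nonneg (le_trans zero_le_one (dw_pos A hA i)) (Int.natCast_nonneg _)
  have h2 : dw A j * (u j : ℤ) ≤ c := by
    rw [← hu, δw]
    exact Finset.single_le_sum (fun i _ => h1 i) (Finset.mem_univ j)
  nlinarith [dw_pos A hA j, Int.natCast_nonneg (u j)]

lemma finite_class (hA : ∀ i, 2 ≤ A i) (c : ℤ) : {v : E n | δw A v = c}.Finite := by
  rw [← Set.finite_coe_iff]
  exact Finite.of_injective (fun (v : {v : E n | δw A v = c}) (j : Fin n) =>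
      (⟨v.1 j, by have := delta_coord_le A hA v.2 j; omega⟩ : Fin (c.toNat + 1)))
    (by
      intro v w hvw
      apply Subtype.ext
      apply Finsupp.ext
      intro j
      simpa using congrFun hvw j)

lemma not_acc_succ {u : E n} (h : ¬ Acc (srel A) u) :
    ∃ v, Step A u v ∧ ¬ Acc (srel A) v := by
  by_contra hc
  push_neg at hc
  exact h (Acc.intro u fun v hv => hc v hv)

variable {A}

def badSeq {u : E n} (h : ¬ Acc (srel A) u) : ℕ → {v : E n // ¬ Acc (srel A) v}
  | 0 => ⟨u, h⟩
  | (m + 1) => ⟨(not_acc_succ A (badSeq h m).2).choose,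
      (not_acc_succ A (badSeq h m).2).choose_spec.2⟩

lemma badSeq_step {u : E n} (h : ¬ Acc (srel A) u) (m : ℕ) :
    Step A (badSeq h m).1 (badSeq h (m + 1)).1 :=
  (not_acc_succ A (badSeq h m).2).choose_spec.1

variable (A)

/-- the Jacobian ideal -/
def Jsp : Ideal (MvPolynomial (Fin n) ℂ) := Ideal.span (Set.range (gP A))

lemma step_mem {k : Fin n} {u : E n} (hk : A k ≤ u k) :
    monomial u (1 : ℂ) + (A (k - 1) : ℂ) • monomial (rwk A k u) 1 ∈ Jsp A := by
  have hgen : gP A (k - 1) ∈ Jsp A := Ideal.subset_span ⟨k - 1, rfl⟩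
  have hmul := (Jsp A).mul_mem_left (monomial (u - Finsupp.single k (A k)) (1 : ℂ)) hgen
  have e1 : (k - 1) + 1 = k := by abel
  have e2 : (k - 1) - 1 = k - 2 := by rw [sub_sub]; norm_num; ext; simp [Fin.val_add]
  have eexp1 : (u - Finsupp.single k (A k)) + vset A (k - 1) = u := by
    rw [vset, e1]
    exact tsub_add_cancel_of_le (Finsupp.single_le_iff.mpr hk)
  have eexp2 : (u - Finsupp.single k (A k)) + mset A (k - 1) = rwk A k u := by
    rw [mset, e2, rwk, add_comm (Finsupp.single (k - 2) (1 : ℕ))]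
  have key : monomial (u - Finsupp.single k (A k)) (1 : ℂ) * gP A (k - 1)
      = monomial u (1 : ℂ) + (A (k - 1) : ℂ) • monomial (rwk A k u) 1 := by
    rw [gP, mul_add, monomial_mul, monomial_mul, eexp1, eexp2, one_mul, one_mul,
      smul_monomial, smul_eq_mul, mul_one]
  rw [← key]
  exact hmul

lemma chain_mem (hA : ∀ i, 2 ≤ A i) {u : E n} (h : ¬ Acc (srel A) u) (m i : ℕ) :
    ∃ c : ℤ, 2 ^ m ≤ c.natAbs ∧
      monomial ((badSeq h i).1) (1 : ℂ) - (c : ℂ) • monomial ((badSeq h (i + m)).1) 1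
        ∈ Jsp A := by
  induction m with
  | zero => exact ⟨1, by norm_num, by simp⟩
  | succ m ih =>
    obtain ⟨c, hc, hmem⟩ := ih
    obtain ⟨k, hk, he⟩ := badSeq_step h (i + m)
    have h2 := step_mem A (u := (badSeq h (i + m)).1) hk
    rw [← he] at h2
    refine ⟨-(c * (A (k - 1) : ℤ)), ?_, ?_⟩
    · rw [Int.natAbs_neg, Int.natAbs_mul, Int.natAbs_natCast]
      calc 2 ^ (m + 1) = 2 ^ m * 2 := by ring
        _ ≤ c.natAbs * A (k - 1) := Nat.mul_le_mul hc (hA _)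
    · show monomial ((badSeq h i).1) (1 : ℂ)
          - ((-(c * (A (k - 1) : ℤ)) : ℤ) : ℂ) • monomial ((badSeq h (i + m + 1)).1) 1 ∈ Jsp A
      have comb := (Jsp A).add_mem hmem ((Jsp A).mul_mem_left (C (c : ℂ)) h2)
      have heq : monomial ((badSeq h i).1) (1 : ℂ)
          - ((-(c * (A (k - 1) : ℤ)) : ℤ) : ℂ) • monomial ((badSeq h (i + m + 1)).1) 1
        = (monomial ((badSeq h i).1) (1 : ℂ) - (c : ℂ) • monomial ((badSeq h (i + m)).1) 1)
          + C (c : ℂ) * (monomial ((badSeq h (i + m)).1) (1 : ℂ)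
            + (A (k - 1) : ℂ) • monomial ((badSeq h (i + m + 1)).1) 1) := by
        rw [← smul_eq_C_mul]
        push_cast
        module
      rw [heq]
      exact comb
  
lemma bad_mem (hA : ∀ i, 2 ≤ A i) {u : E n} (h : ¬ Acc (srel A) u) :
    monomial u (1 : ℂ) ∈ Jsp A := by
  classical
  have hδ : ∀ m, δw A (badSeq h m).1 = δw A u := by
    intro m
    induction m with
    | zero => rfl
    | succ m ih => rw [step_delta A hA (badSeq_step h m), ih]
  haveI : Finite ↥{v : E n | δw A v = δw A u} :=
    Set.finite_coe_iff.mpr (finite_class A hA (δw A u))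
  obtain ⟨i, i', hne, heqs⟩ := Finite.exists_ne_map_eq_of_infinite
    (fun m : ℕ => (⟨(badSeq h m).1, hδ m⟩ : ↥{v : E n | δw A v = δw A u}))
  have heq' : (badSeq h i).1 = (badSeq h i').1 :=
    congrArg (fun x : ↥{v : E n | δw A v = δw A u} => x.1) heqs
  have main : ∀ i i', i < i' → (badSeq h i).1 = (badSeq h i').1 →
      monomial u (1 : ℂ) ∈ Jsp A := by
    intro i i' hlt heq
    obtain ⟨c, hc, hmem⟩ := chain_mem A hA h (i' - i) i
    rw [Nat.add_sub_cancel' hlt.le, ← heq] at hmem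
    have h1 : ((1 : ℂ) - c) • monomial ((badSeq h i).1) (1 : ℂ) ∈ Jsp A := by
      rw [sub_smul, one_smul]
      exact hmem
    have hcne : (1 : ℂ) - (c : ℂ) ≠ 0 := by
      have h2 : 2 ≤ c.natAbs := le_trans (by
        have : 1 ≤ i' - i := by omega
        calc 2 = 2 ^ 1 := by norm_num
          _ ≤ 2 ^ (i' - i) := Nat.pow_le_pow_right (by norm_num) this) hc
      have : c ≠ 1 := by omega
      intro hcon
      apply this
      have : (c : ℂ) = 1 := by linear_combination -hcon
      exact_mod_cast this
    have h2 : monomial ((badSeq h i).1) (1 : ℂ) ∈ Jsp A := by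
      have h3 := (Jsp A).mul_mem_left (C ((1 - (c : ℂ))⁻¹)) h1
      rwa [← smul_eq_C_mul, smul_smul, inv_mul_cancel₀ hcne, one_smul] at h3
    obtain ⟨c₀, _, hmem0⟩ := chain_mem A hA h i 0
    rw [Nat.zero_add] at hmem0
    have h0 : (badSeq h 0).1 = u := rfl
    rw [h0] at hmem0
    have h4 := (Jsp A).add_mem hmem0 ((Jsp A).mul_mem_left (C (c₀ : ℂ)) h2)
    have heq2 : monomial u (1 : ℂ) =
        (monomial u (1 : ℂ) - (c₀ : ℂ) • monomial ((badSeq h i).1) 1)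
          + C (c₀ : ℂ) * monomial ((badSeq h i).1) 1 := by
      rw [← smul_eq_C_mul]
      module
    rw [heq2]
    exact h4
  rcases hne.lt_or_gt with hlt | hlt
  · exact main i i' hlt heq'
  · exact main i' i hlt heq'.symm

end
end DualLoopAux3
namespace DualLoopAux4
open DualLoopAux DualLoopAux2 DualLoopAux3 MvPolynomial

noncomputable section
open scoped Classical

variable {n : ℕ} [NeZero n] (A : Fin n → ℕ)

def Good := {u : E n // Acc (srel A) u}

def grel (x y : Good A) : Prop := Step A y.1 x.1

lemma acc_grel (u : E n) (h : Acc (srel A) u) :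
    ∀ (h' : Acc (srel A) u), Acc (grel A) ⟨u, h'⟩ := by
  induction h with
  | intro x hx ih =>
    intro h'
    constructor
    rintro ⟨y, hy⟩ hstep
    exact ih y hstep hy

lemma wf_grel : WellFounded (grel A) := ⟨fun g => acc_grel A g.1 g.2 g.2⟩

def vioF (u : E n) : Finset (Fin n) := Finset.univ.filter (fun k => A k ≤ u k)

def succG (g : Good A) (k : Fin n) (hk : A k ≤ g.1 k) : Good A :=
  ⟨rwk A k g.1, g.2.inv ⟨k, hk, rfl⟩⟩

lemma grel_succG (g : Good A) (k : Fin n) (hk : A k ≤ g.1 k) :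
    grel A (succG A g k hk) g := ⟨k, hk, rfl⟩

def NFbody (g : Good A) (IH : ∀ y : Good A, grel A y g → ℂ × E n) : ℂ × E n :=
  if hv : (vioF A g.1).Nonempty then
    let k := (vioF A g.1).min' hv
    let hk : A k ≤ g.1 k := (Finset.mem_filter.mp (Finset.min'_mem _ hv)).2
    let r := IH (succG A g k hk) (grel_succG A g k hk)
    (-(A (k - 1) : ℂ) * r.1, r.2)
  else (1, g.1)

def NF : Good A → ℂ × E n := (wf_grel A).fix (NFbody A)

lemma NF_unfold (g : Good A) : NF A g = NFbody A g (fun y _ => NF A y) :=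
  WellFounded.fix_eq _ _ g

lemma NF_terminal (g : Good A) (h : ¬ (vioF A g.1).Nonempty) : NF A g = (1, g.1) := by
  rw [NF_unfold, NFbody, dif_neg h]

lemma NF_min (g : Good A) (hv : (vioF A g.1).Nonempty) :
    NF A g = (-(A ((vioF A g.1).min' hv - 1) : ℂ) *
        (NF A (succG A g ((vioF A g.1).min' hv)
          (Finset.mem_filter.mp (Finset.min'_mem _ hv)).2)).1,
      (NF A (succG A g ((vioF A g.1).min' hv)
        (Finset.mem_filter.mp (Finset.min'_mem _ hv)).2)).2) := by
  rw [NF_unfold, NFbody, dif_pos hv]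

lemma NF_step : ∀ (g : Good A) (k : Fin n) (hk : A k ≤ g.1 k),
    NF A g = (-(A (k - 1) : ℂ) * (NF A (succG A g k hk)).1, (NF A (succG A g k hk)).2) := by
  intro g
  refine (wf_grel A).induction
    (C := fun g => ∀ (k : Fin n) (hk : A k ≤ g.1 k),
      NF A g = (-(A (k - 1) : ℂ) * (NF A (succG A g k hk)).1, (NF A (succG A g k hk)).2))
    g ?_
  intro x IH k hk
  have hv : (vioF A x.1).Nonempty :=
    ⟨k, Finset.mem_filter.mpr ⟨Finset.mem_univ _, hk⟩⟩
  have hk₀ : A ((vioF A x.1).min' hv) ≤ x.1 ((vioF A x.1).min' hv) :=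
    (Finset.mem_filter.mp (Finset.min'_mem _ hv)).2
  set k₀ := (vioF A x.1).min' hv with hk₀def
  rw [NF_min A x hv]
  by_cases hkk : k = k₀
  · subst hkk
    rfl
  · have hks : A k ≤ (succG A x k₀ hk₀).1 k := le_rwk A hkk hk
    have hk0s : A k₀ ≤ (succG A x k hk).1 k₀ := le_rwk A (Ne.symm hkk) hk₀
    have e1 := IH (succG A x k₀ hk₀) (grel_succG A x k₀ hk₀) k hks
    have e2 := IH (succG A x k hk) (grel_succG A x k hk) k₀ hk0s
    have ecomm : succG A (succG A x k₀ hk₀) k hks = succG A (succG A x k hk) k₀ hk0s :=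
      Subtype.ext (rwk_comm A hkk hk hk₀)
    rw [e1, e2, ecomm]
    exact Prod.ext (by ring) rfl

lemma NF_std (g : Good A) : ∀ k, (NF A g).2 k < A k := by
  refine (wf_grel A).induction (C := fun g => ∀ k, (NF A g).2 k < A k) g ?_
  intro x IH k
  by_cases hv : (vioF A x.1).Nonempty
  · rw [NF_min A x hv]
    exact IH _ (grel_succG A x _ _) k
  · rw [NF_terminal A x hv]
    have := Finset.not_nonempty_iff_eq_empty.mp hv
    have hk : k ∉ vioF A x.1 := by rw [this]; exact Finset.notMem_empty k
    rw [vioF, Finset.mem_filter] at hk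
    push_neg at hk
    exact hk (Finset.mem_univ k)

lemma NF_mem (g : Good A) :
    monomial g.1 (1 : ℂ) - (NF A g).1 • monomial (NF A g).2 1 ∈ Jsp A := by
  refine (wf_grel A).induction
    (C := fun g => monomial g.1 (1 : ℂ) - (NF A g).1 • monomial (NF A g).2 1 ∈ Jsp A) g ?_
  intro x IH
  by_cases hv : (vioF A x.1).Nonempty
  · set k₀ := (vioF A x.1).min' hv with hk₀def
    have hk₀ : A k₀ ≤ x.1 k₀ := (Finset.mem_filter.mp (Finset.min'_mem _ hv)).2
    rw [NF_min A x hv]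
    have hstep := step_mem A (u := x.1) hk₀
    have hih := IH (succG A x k₀ hk₀) (grel_succG A x k₀ hk₀)
    have h3 := (Jsp A).mul_mem_left (C ((A (k₀ - 1) : ℂ))) hih
    rw [← smul_eq_C_mul] at h3
    have h4 := (Jsp A).sub_mem hstep h3
    have heq : monomial x.1 (1 : ℂ)
        - (-(A (k₀ - 1) : ℂ) * (NF A (succG A x k₀ hk₀)).1)
            • monomial (NF A (succG A x k₀ hk₀)).2 1
      = (monomial x.1 (1 : ℂ) + (A (k₀ - 1) : ℂ) • monomial (rwk A k₀ x.1) 1)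
        - (A (k₀ - 1) : ℂ) • (monomial ((succG A x k₀ hk₀).1) (1 : ℂ)
            - (NF A (succG A x k₀ hk₀)).1 • monomial (NF A (succG A x k₀ hk₀)).2 1) := by
      show _ = (monomial x.1 (1 : ℂ) + (A (k₀ - 1) : ℂ) • monomial (rwk A k₀ x.1) 1)
        - (A (k₀ - 1) : ℂ) • (monomial (rwk A k₀ x.1) (1 : ℂ)
            - (NF A (succG A x k₀ hk₀)).1 • monomial (NF A (succG A x k₀ hk₀)).2 1)
      module
    rw [heq]
    exact h4
  · rw [NF_terminal A x hv]
    simp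

lemma std_acc {u : E n} (hstd : ∀ k, u k < A k) : Acc (srel A) u :=
  Acc.intro u (by rintro v ⟨k, hk, _⟩; exact absurd hk (not_le.mpr (hstd k)))

def Pfun (u : E n) : MvPolynomial (Fin n) ℂ :=
  if h : Acc (srel A) u then (NF A ⟨u, h⟩).1 • monomial (NF A ⟨u, h⟩).2 1 else 0

lemma Pfun_acc {u : E n} (h : Acc (srel A) u) :
    Pfun A u = (NF A ⟨u, h⟩).1 • monomial (NF A ⟨u, h⟩).2 1 := dif_pos h

lemma Pfun_not {u : E n} (h : ¬ Acc (srel A) u) : Pfun A u = 0 := dif_neg h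

lemma key_rel (j : Fin n) (u : E n) :
    Pfun A (u + vset A j) = (-(A j : ℂ)) • Pfun A (u + mset A j) := by
  have e1 : (j + 1) - 1 = j := by abel
  have e2 : (j + 1) - 2 = j - 1 := by
    rw [show (2 : Fin n) = 1 + 1 from by ext; simp [Fin.val_add], ← sub_sub, e1]
  have hk : A (j + 1) ≤ (u + vset A j) (j + 1) := by
    rw [vset, Finsupp.add_apply, Finsupp.single_apply, if_pos rfl]
    omega
  have hrw : rwk A (j + 1) (u + vset A j) = u + mset A j := by
    rw [rwk, vset, mset, e1, e2, add_tsub_cancel_right]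
    exact congrArg _ (add_comm _ _)
  by_cases h : Acc (srel A) (u + vset A j)
  · have hstep : Step A (u + vset A j) (u + mset A j) := ⟨j + 1, hk, hrw.symm⟩
    have hm : Acc (srel A) (u + mset A j) := h.inv hstep
    rw [Pfun_acc A h, Pfun_acc A hm]
    have hns := NF_step A ⟨u + vset A j, h⟩ (j + 1) hk
    have hsg : succG A ⟨u + vset A j, h⟩ (j + 1) hk = ⟨u + mset A j, hm⟩ :=
      Subtype.ext hrw
    rw [hsg] at hns
    rw [hns, e1, smul_smul]
  · have hm : ¬ Acc (srel A) (u + mset A j) := by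
      intro hm
      exact h (acc_of_step A _ hm _ ⟨j + 1, hk, hrw.symm⟩)
    rw [Pfun_not A h, Pfun_not A hm, smul_zero]

def piL : MvPolynomial (Fin n) ℂ →ₗ[ℂ] MvPolynomial (Fin n) ℂ :=
  (basisMonomials (Fin n) ℂ).constr ℂ (Pfun A)

lemma piL_monomial (u : E n) : piL A (monomial u 1) = Pfun A u := by
  have h : monomial u (1 : ℂ) = basisMonomials (Fin n) ℂ u := by
    rw [coe_basisMonomials]
  rw [h, piL]
  exact Module.Basis.constr_basis _ _ _ _

lemma piL_monomial' (u : E n) (c : ℂ) : piL A (monomial u c) = c • Pfun A u := by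
  have h : monomial u c = c • monomial u (1 : ℂ) := by rw [smul_monomial, smul_eq_mul, mul_one]
  rw [h, map_smul, piL_monomial]

lemma piL_gen (u : E n) (c : ℂ) (j : Fin n) : piL A (monomial u c * gP A j) = 0 := by
  rw [gP, mul_add, monomial_mul, monomial_mul, map_add, piL_monomial', piL_monomial',
    key_rel]
  module

lemma piL_J : ∀ f ∈ Jsp A, piL A f = 0 := by
  intro f hf
  rw [Jsp] at hf
  obtain ⟨c, hcf⟩ := (Ideal.mem_span_range_iff_exists_fun).mp hf
  rw [← hcf, map_sum]
  apply Finset.sum_eq_zero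
  intro j _
  have h : c j * gP A j = ∑ v ∈ (c j).support, monomial v (coeff v (c j)) * gP A j := by
    conv_lhs => rw [as_sum (c j)]
    rw [Finset.sum_mul]
  rw [h, map_sum]
  exact Finset.sum_eq_zero fun v _ => piL_gen A v _ j

lemma sub_piL_mem (hA : ∀ i, 2 ≤ A i) (f : MvPolynomial (Fin n) ℂ) : f - piL A f ∈ Jsp A := by
  have hmono : ∀ (v : E n) (c : ℂ), monomial v c - piL A (monomial v c) ∈ Jsp A := by
    intro v c
    rw [piL_monomial']
    have hbase : monomial v (1 : ℂ) - Pfun A v ∈ Jsp A := by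
      by_cases h : Acc (srel A) v
      · rw [Pfun_acc A h]
        exact NF_mem A ⟨v, h⟩
      · rw [Pfun_not A h, sub_zero]
        exact bad_mem A hA h
    have h2 := (Jsp A).mul_mem_left (C c) hbase
    rw [← smul_eq_C_mul, smul_sub] at h2
    rwa [show (monomial v c : MvPolynomial (Fin n) ℂ) = c • monomial v 1 from by
      rw [smul_monomial, smul_eq_mul, mul_one]]
  rw [as_sum f, map_sum, ← Finset.sum_sub_distrib]
  exact Submodule.sum_mem _ fun v _ => hmono v _

end
end DualLoopAux4
namespace DualLoopAux5
open DualLoopAux DualLoopAux2 DualLoopAux3 DualLoopAux4 MvPolynomial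

noncomputable section

variable {n : ℕ} [NeZero n] (A : Fin n → ℕ)

def StdS := {s : E n // ∀ k, s k < A k}

def stdM (s : StdS A) : MvPolynomial (Fin n) ℂ := monomial s.1 1

def Vsp : Submodule ℂ (MvPolynomial (Fin n) ℂ) := Submodule.span ℂ (Set.range (stdM A))

lemma Pfun_mem_V (u : E n) : Pfun A u ∈ Vsp A := by
  by_cases h : Acc (srel A) u
  · rw [Pfun_acc A h]
    exact Submodule.smul_mem _ _
      (Submodule.subset_span ⟨⟨(NF A ⟨u, h⟩).2, NF_std A ⟨u, h⟩⟩, rfl⟩)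
  · rw [Pfun_not A h]
    exact zero_mem _

lemma piL_mem_V (f : MvPolynomial (Fin n) ℂ) : piL A f ∈ Vsp A := by
  rw [as_sum f, map_sum]
  exact Submodule.sum_mem _ fun v _ => by
    rw [piL_monomial']
    exact Submodule.smul_mem _ _ (Pfun_mem_V A v)

lemma piL_fix (s : StdS A) : piL A (stdM A s) = stdM A s := by
  rw [stdM, piL_monomial]
  have hacc := std_acc A s.2
  have hterm : ¬ (vioF A (⟨s.1, hacc⟩ : Good A).1).Nonempty := by
    rw [Finset.nonempty_iff_ne_empty]
    push_neg
    rw [Finset.eq_empty_iff_forall_notMem]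
    intro k hkmem
    rw [vioF, Finset.mem_filter] at hkmem
    exact absurd hkmem.2 (not_le.mpr (s.2 k))
  rw [Pfun_acc A hacc, NF_terminal A _ hterm, one_smul]

lemma piL_fix_V : ∀ v ∈ Vsp A, piL A v = v := by
  intro v hv
  induction hv using Submodule.span_induction with
  | mem x hx => obtain ⟨s, rfl⟩ := hx; exact piL_fix A s
  | zero => exact map_zero _
  | add x y _ _ hx hy => rw [map_add, hx, hy]
  | smul c x _ hx => rw [map_smul, hx]

def eqStd : StdS A ≃ (∀ j : Fin n, Fin (A j)) where
  toFun s j := ⟨s.1 j, s.2 j⟩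
  invFun F := ⟨Finsupp.equivFunOnFinite.symm (fun j => (F j : ℕ)), fun k => by
    simp only [Finsupp.equivFunOnFinite_symm_apply_apply]
    exact (F k).2⟩
  left_inv s := Subtype.ext (Finsupp.ext fun j => by
    simp only [Finsupp.equivFunOnFinite_symm_apply_apply])
  right_inv F := funext fun j => Fin.ext (by
    simp only [Finsupp.equivFunOnFinite_symm_apply_apply])

lemma linIndep_stdM : LinearIndependent ℂ (stdM A) := by
  have h2 := (basisMonomials (Fin n) ℂ).linearIndependent.comp
    (fun s : StdS A => s.1) Subtype.val_injective
  have e : (⇑(basisMonomials (Fin n) ℂ) ∘ fun s : StdS A => s.1) = stdM A := by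
    funext s
    rw [Function.comp_apply, stdM]
    exact congrFun (coe_basisMonomials (Fin n) ℂ) s.1
  rwa [e] at h2

end
end DualLoopAux5

open MvPolynomial DualLoopAux DualLoopAux2 DualLoopAux3 DualLoopAux4 DualLoopAux5

set_option maxHeartbeats 1000000 in
/-- The Milnor ring of the dual loop polynomial
`w = x_n x_1^{a_1} + ∑_{i=2}^{n} x_{i−1} x_i^{a_i}` is finite dimensional over `ℂ`,
of dimension `μ_w = ∏_{j=1}^{n} a_j`. Indices are `0`-based via `Fin n`:
the predecessor of the variable `i = 0` is `n − 1`. -/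
theorem dual_loop_milnor_number {n : ℕ} (hn : 2 ≤ n) (a : ℕ → ℕ)
    (ha : ∀ i < n, 2 ≤ a i)
    (w : MvPolynomial (Fin n) ℂ)
    (hw : w = ∑ i : Fin n,
      if (i : ℕ) = 0 then
        X (⟨n - 1, Nat.sub_lt (by omega) one_pos⟩ : Fin n) * X i ^ a (i : ℕ)
      else X (⟨(i : ℕ) - 1, Nat.lt_of_le_of_lt (Nat.sub_le _ _) i.isLt⟩ : Fin n) *
        X i ^ a (i : ℕ))
    (J : Ideal (MvPolynomial (Fin n) ℂ))
    (hJ : J = Ideal.span (Set.range fun i => MvPolynomial.pderiv i w)) :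
    FiniteDimensional ℂ (MvPolynomial (Fin n) ℂ ⧸ J) ∧
      Module.finrank ℂ (MvPolynomial (Fin n) ℂ ⧸ J) = ∏ j ∈ Finset.range n, a j := by
  haveI : NeZero n := ⟨by omega⟩
  classical
  set A : Fin n → ℕ := fun j => a j.val with hAdef
  have hA : ∀ j : Fin n, 2 ≤ A j := fun j => ha j.val j.isLt
  have hone : (1 : Fin n) ≠ 0 := by
    rw [Ne, Fin.one_eq_zero_iff]; omega
  have hval1 : ((1 : Fin n) : ℕ) = 1 := by
    rw [Fin.val_one' n, Nat.mod_eq_of_lt (by omega)]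
  -- rewrite w as a sum of monomials
  have hw2 : w = ∑ i : Fin n,
      monomial (Finsupp.single (i - 1) 1 + Finsupp.single i (A i)) (1 : ℂ) := by
    rw [hw]
    apply Finset.sum_congr rfl
    intro i _
    have hXX : ∀ (b : Fin n), X b * X i ^ (a (i : ℕ)) =
        (monomial (Finsupp.single b 1 + Finsupp.single i (a (i : ℕ))) (1 : ℂ)) := by
      intro b
      rw [show (X b : MvPolynomial (Fin n) ℂ) = X b ^ 1 from (pow_one _).symm,
        X_pow_eq_monomial, X_pow_eq_monomial, monomial_mul, one_mul]
    by_cases h0 : (i : ℕ) = 0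
    · have hidx : (⟨n - 1, Nat.sub_lt (by omega) one_pos⟩ : Fin n) = i - 1 := by
        apply Fin.ext
        rw [Fin.sub_def]
        simp only [hval1]
        show n - 1 = (n - (1 : ℕ) + (i : ℕ)) % n
        rw [h0, Nat.add_zero, Nat.mod_eq_of_lt (by omega)]
      rw [if_pos h0, hXX, hidx]
    · have hidx : (⟨(i : ℕ) - 1, Nat.lt_of_le_of_lt (Nat.sub_le _ _) i.isLt⟩ : Fin n)
          = i - 1 := by
        apply Fin.ext
        rw [Fin.sub_def]
        simp only [hval1]
        show (i : ℕ) - 1 = (n - (1 : ℕ) + (i : ℕ)) % n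
        have hi1 : 1 ≤ (i : ℕ) := by omega
        have hrw : n - 1 + (i : ℕ) = n + ((i : ℕ) - 1) := by omega
        rw [hrw, Nat.add_mod_left, Nat.mod_eq_of_lt (by omega)]
      rw [if_neg h0, hXX, hidx]
  -- compute the partial derivatives
  have hg : (fun j => MvPolynomial.pderiv j w) = gP A := by
    funext j
    rw [hw2, map_sum]
    have hterm : ∀ i : Fin n,
        pderiv j (monomial (Finsupp.single (i - 1) 1 + Finsupp.single i (A i)) (1 : ℂ))
        = (if i = j then monomial (mset A j) ((A j : ℂ)) else 0)
          + (if i = j + 1 then monomial (vset A j) 1 else 0) := by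
      intro i
      rw [pderiv_monomial]
      by_cases hij : i = j
      · subst hij
        have hii : i - 1 ≠ i := by
          rw [Ne, sub_eq_self]; exact hone
        have hcoef : (Finsupp.single (i - 1) 1 + Finsupp.single i (A i) : E n) i = A i := by
          rw [Finsupp.add_apply, Finsupp.single_apply, Finsupp.single_apply,
            if_neg hii, if_pos rfl, zero_add]
        have hexp : (Finsupp.single (i - 1) 1 + Finsupp.single i (A i) : E n)
            - Finsupp.single i 1 = mset A i := by
          rw [mset]
          ext c
          simp only [Finsupp.tsub_apply, Finsupp.add_apply, Finsupp.single_apply]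
          split_ifs <;> simp_all <;> omega
        have hne2 : i ≠ i + 1 := by
          intro hc
          exact hone (by rwa [left_eq_add] at hc)
        rw [hcoef, hexp, if_pos rfl, if_neg hne2, one_mul, add_zero]
      · by_cases hij1 : i = j + 1
        · subst hij1
          have hj : (j + 1) - 1 = j := by abel
          have hcoef : (Finsupp.single ((j + 1) - 1) 1
              + Finsupp.single (j + 1) (A (j + 1)) : E n) j = 1 := by
            rw [hj, Finsupp.add_apply, Finsupp.single_apply, Finsupp.single_apply,
              if_pos rfl, if_neg hij, add_zero]
          have hexp : (Finsupp.single ((j + 1) - 1) 1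
              + Finsupp.single (j + 1) (A (j + 1)) : E n)
              - Finsupp.single j 1 = vset A j := by
            rw [hj, vset]
            ext c
            simp only [Finsupp.tsub_apply, Finsupp.add_apply, Finsupp.single_apply]
            split_ifs <;> simp_all <;> omega
          rw [hcoef, hexp, if_neg hij, if_pos rfl, zero_add, Nat.cast_one, mul_one]
        · have h1 : i - 1 ≠ j := by
            intro hc
            apply hij1
            rw [← hc]
            abel
          have hcoef : (Finsupp.single (i - 1) 1 + Finsupp.single i (A i) : E n) j = 0 := by
            rw [Finsupp.add_apply, Finsupp.single_apply, Finsupp.single_apply,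
              if_neg h1, if_neg hij, add_zero]
          rw [hcoef, if_neg hij, if_neg hij1]
          simp
    rw [Finset.sum_congr rfl (fun i _ => hterm i), Finset.sum_add_distrib,
      Finset.sum_ite_eq', Finset.sum_ite_eq']
    simp only [Finset.mem_univ, if_true]
    rw [gP, add_comm]
  have hJ2 : J = Jsp A := by
    rw [hJ, Jsp, hg]
  -- the linear map from the span of standard monomials to the quotient
  set Φ : Vsp A →ₗ[ℂ] (MvPolynomial (Fin n) ℂ ⧸ J) :=
    (Ideal.Quotient.mkₐ ℂ J).toLinearMap.comp (Vsp A).subtype with hΦ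
  have hΦval : ∀ v : Vsp A, Φ v = Ideal.Quotient.mk J v.1 := fun v => rfl
  have hsurj : Function.Surjective Φ := by
    intro q
    obtain ⟨f, rfl⟩ := Ideal.Quotient.mk_surjective q
    refine ⟨⟨piL A f, piL_mem_V A f⟩, ?_⟩
    rw [hΦval]
    rw [Ideal.Quotient.eq]
    have hsub := sub_piL_mem A hA f
    rw [← hJ2] at hsub
    have : piL A f - f = -(f - piL A f) := by ring
    rw [this]
    exact Submodule.neg_mem _ hsub
  have hinj : Function.Injective Φ := by
    intro v v' hvv
    have h0 : (v.1 - v'.1) ∈ J := by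
      rw [← Ideal.Quotient.eq]
      rw [hΦval, hΦval] at hvv
      exact hvv
    rw [hJ2] at h0
    have h1 : piL A (v.1 - v'.1) = 0 := piL_J A _ h0
    rw [map_sub, piL_fix_V A v.1 v.2, piL_fix_V A v'.1 v'.2, sub_eq_zero] at h1
    exact Subtype.ext h1
  let e : (Vsp A) ≃ₗ[ℂ] (MvPolynomial (Fin n) ℂ ⧸ J) :=
    LinearEquiv.ofBijective Φ ⟨hinj, hsurj⟩
  haveI : Finite (StdS A) := Finite.of_equiv _ (eqStd A).symm
  haveI : FiniteDimensional ℂ (Vsp A) :=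
    FiniteDimensional.span_of_finite ℂ (Set.finite_range (stdM A))
  constructor
  · exact Module.Finite.equiv e
  · haveI := Fintype.ofFinite (StdS A)
    rw [← e.finrank_eq, Vsp, finrank_span_eq_card (linIndep_stdM A),
      Fintype.card_congr (eqStd A), Fintype.card_pi]
    simp only [Fintype.card_fin]
    exact Fin.prod_univ_eq_prod_range a n
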